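/- Every counter system whose step relation 𝒯 consists exactly of the guarded synchronization steps induced by a finite set of synchronization transitions together with a guard pair (G∃^a, G∀^a) for each label a is fully ≼₀-compatible. -/
import Mathlib


namespace CS01

variable {C Q A : Type*}

/-- Configurations of a counter system: a controller state and a counter vector. -/
abbrev Conf (C Q : Type*) := C × (Q → ℕ)

/-- The order `≼₀`: same controller state, pointwise smaller counters,
and the same zero pattern. -/
def Le0 (x y : Conf C Q) : Prop :=
  x.1 = y.1 ∧ (∀ q, x.2 q ≤ y.2 q) ∧ ∀ q, (x.2 q = 0 ↔ y.2 q = 0)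

/-- The product order `≼₀ × ≼₀` on pairs of configurations. -/
def ProdLe0 (s t : Conf C Q × Conf C Q) : Prop :=
  Le0 s.1 t.1 ∧ Le0 s.2 t.2

/-- The abstraction `α`, mapping a configuration to its 01-abstraction. -/
def alpha (x : Conf C Q) : Conf C Q :=
  (x.1, fun q => if x.2 q = 0 then 0 else 1)

/-- Forward `≼₀`-compatibility of a step relation. -/
def FwdCompat (T : Set (Conf C Q × Conf C Q)) : Prop :=
  ∀ x y d, (x, y) ∈ T → Le0 x d → ∃ d', (d, d') ∈ T ∧ Le0 y d'

/-- Backward `≼₀`-compatibility of a step relation. -/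
def BwdCompat (T : Set (Conf C Q × Conf C Q)) : Prop :=
  ∀ x y d', (x, y) ∈ T → Le0 y d' → ∃ d, (d, d') ∈ T ∧ Le0 x d

/-- Steps of a counter system are size-preserving. -/
def SizePreserving [Fintype Q] (T : Set (Conf C Q × Conf C Q)) : Prop :=
  ∀ t ∈ T, ∑ q, t.1.2 q = ∑ q, t.2.2 q

/-- A step of the 01-counter system `𝒞_α`. -/
def AbsStep (T : Set (Conf C Q × Conf C Q)) (x' y' : Conf C Q) : Prop :=
  ∃ t ∈ T, alpha t.1 = x' ∧ alpha t.2 = y'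

/-- A finite run of the counter system, starting in an initial configuration. -/
def IsRun (T : Set (Conf C Q × Conf C Q)) (c0 : C) (Q0 : Set Q)
    {n : ℕ} (ρ : Fin (n + 1) → Conf C Q) : Prop :=
  (ρ 0).1 = c0 ∧ (∀ q ∉ Q0, (ρ 0).2 q = 0) ∧
    ∀ i : Fin n, (ρ i.castSucc, ρ i.succ) ∈ T

/-- A finite run of the 01-counter system, starting in an initial (0/1-valued)
abstract configuration. -/
def IsAbsRun (T : Set (Conf C Q × Conf C Q)) (c0 : C) (Q0 : Set Q)
    {n : ℕ} (σ : Fin (n + 1) → Conf C Q) : Prop :=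
  (σ 0).1 = c0 ∧ (∀ q, (σ 0).2 q ≤ 1) ∧ (∀ q ∉ Q0, (σ 0).2 q = 0) ∧
    ∀ i : Fin n, AbsStep T (σ i.castSucc) (σ i.succ)

/-- Reachability in the counter system. -/
def Reach (T : Set (Conf C Q × Conf C Q)) (c0 : C) (Q0 : Set Q)
    (x : Conf C Q) : Prop :=
  ∃ (n : ℕ) (ρ : Fin (n + 1) → Conf C Q), IsRun T c0 Q0 ρ ∧ ρ (Fin.last n) = x

/-- Reachability in the 01-counter system. -/
def AbsReach (T : Set (Conf C Q × Conf C Q)) (c0 : C) (Q0 : Set Q)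
    (x : Conf C Q) : Prop :=
  ∃ (n : ℕ) (σ : Fin (n + 1) → Conf C Q), IsAbsRun T c0 Q0 σ ∧ σ (Fin.last n) = x

/-- The counter vector obtained when `i` processes move from `p` to `p'`. -/
def moveN [DecidableEq Q] (v : Q → ℕ) (p p' : Q) (i : ℕ) : Q → ℕ :=
  fun q => v q - (if q = p then i else 0) + (if q = p' then i else 0)

/-- A synchronization step on letter `a`: every process whose current state has
an outgoing `a`-transition takes some `a`-transition; processes without an
`a`-transition stay put. `k p p'` is the number of user processes taking the
transition `(p, a, p')`. -/
def SyncStepOn [Fintype Q] (ΔC : Set (C × A × C)) (ΔQ : Set (Q × A × Q)) (a : A)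
    (x y : Conf C Q) : Prop :=
  ((∃ c', (x.1, a, c') ∈ ΔC) → (x.1, a, y.1) ∈ ΔC) ∧
  (¬ (∃ c', (x.1, a, c') ∈ ΔC) → y.1 = x.1) ∧
  ∃ k : Q → Q → ℕ,
    (∀ p p', k p p' ≠ 0 → (p, a, p') ∈ ΔQ) ∧
    (∀ q, (∃ q', (q, a, q') ∈ ΔQ) → ∑ p', k q p' = x.2 q) ∧
    (∀ q, (∃ q', (q, a, q') ∈ ΔQ) → y.2 q = ∑ p, k p q) ∧
    (∀ q, ¬ (∃ q', (q, a, q') ∈ ΔQ) → y.2 q = x.2 q + ∑ p, k p q)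

/-- A synchronization step: a synchronization step on some letter `a`. -/
def SyncStep [Fintype Q] (ΔC : Set (C × A × C)) (ΔQ : Set (Q × A × Q))
    (x y : Conf C Q) : Prop :=
  ∃ a : A, SyncStepOn ΔC ΔQ a x y

/-- The enabling condition of a guard pair `(Ge, Ga)` in a configuration `x`:
letting `S` be the set of occupied states (controller state plus all user
states holding at least one process), we require `S ∩ Ge ≠ ∅` and `S ⊆ Ga`. -/
def GuardOK (Ge Ga : Set (C ⊕ Q)) (x : Conf C Q) : Prop :=
  ((Sum.inl x.1 ∈ Ge) ∨ ∃ q, 1 ≤ x.2 q ∧ Sum.inr q ∈ Ge) ∧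
  ((Sum.inl x.1 ∈ Ga) ∧ ∀ q, 1 ≤ x.2 q → Sum.inr q ∈ Ga)

/-- A guarded synchronization step: a synchronization step on a letter `a`
whose guard pair `(Ge a, Ga a)` is enabled in the source configuration. -/
def GSyncStep [Fintype Q] (ΔC : Set (C × A × C)) (ΔQ : Set (Q × A × Q))
    (Ge Ga : A → Set (C ⊕ Q)) (x y : Conf C Q) : Prop :=
  ∃ a : A, GuardOK (Ge a) (Ga a) x ∧ SyncStepOn ΔC ΔQ a x y

private lemma guard_mono {Ge Ga : Set (C ⊕ Q)} {x d : Conf C Q}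
    (hle : Le0 x d) (h : GuardOK Ge Ga x) : GuardOK Ge Ga d := by
  obtain ⟨hc, hv, hz⟩ := hle
  refine ⟨?_, hc ▸ h.2.1, fun q hq => h.2.2 q ?_⟩
  · rcases h.1 with h1 | ⟨q, hq1, hq2⟩
    · exact Or.inl (hc ▸ h1)
    · exact Or.inr ⟨q, le_trans hq1 (hv q), hq2⟩
  · have : x.2 q ≠ 0 := by
      intro h0
      have := (hz q).mp h0
      omega
    omega

private lemma fwd_sync [Fintype Q] {ΔC : Set (C × A × C)} {ΔQ : Set (Q × A × Q)}
    {a : A} {x y d : Conf C Q} (h : SyncStepOn ΔC ΔQ a x y) (hle : Le0 x d) :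
    ∃ d' : Conf C Q, SyncStepOn ΔC ΔQ a d d' ∧ Le0 y d' := by
  classical
  obtain ⟨c, v⟩ := x
  obtain ⟨c', v'⟩ := y
  obtain ⟨dc, w⟩ := d
  obtain ⟨hcd, hvw, hz⟩ := hle
  simp only at hcd hvw hz
  cases hcd
  obtain ⟨hc1, hc2, k, hkΔ, hksrc, hktgt, hkfix⟩ := h
  simp only at hc1 hc2 hksrc hktgt hkfix
  set ch : Q → Q := fun q => if h : ∃ r, k q r ≠ 0 then h.choose else q with hch
  have hchspec : ∀ q, (∃ r, k q r ≠ 0) → k q (ch q) ≠ 0 := by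
    intro q hq
    simp only [hch, dif_pos hq]
    exact hq.choose_spec
  set k' : Q → Q → ℕ := fun p p' =>
    k p p' + if (∃ r, k p r ≠ 0) ∧ p' = ch p then w p - v p else 0 with hk'
  have hk'z : ∀ p q, k p q = 0 → k' p q = 0 := by
    intro p q h0
    simp only [hk', h0, zero_add, ite_eq_right_iff]
    rintro ⟨he, rfl⟩
    exact absurd h0 (hchspec p he)
  have hk'le : ∀ p q, k p q ≤ k' p q := fun p q => Nat.le_add_right _ _
  have hrow : ∀ q, ∑ p', k' q p' =
      (∑ p', k q p') + (if (∃ r, k q r ≠ 0) then w q - v q else 0) := by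
    intro q
    simp only [hk']
    rw [Finset.sum_add_distrib]
    congr 1
    by_cases hq : ∃ r, k q r ≠ 0
    · simp [hq, Finset.sum_ite_eq']
    · simp [hq]
  refine ⟨(c', fun q => (if (∃ q', (q, a, q') ∈ ΔQ) then 0 else w q) + ∑ p, k' p q),
    ⟨hc1, hc2, k', ?_, ?_, ?_, ?_⟩, rfl, ?_, ?_⟩
  · intro p p' hne
    by_cases h0 : k p p' = 0
    · exact absurd (hk'z p p' h0) hne
    · exact hkΔ p p' h0
  · intro q hq
    rw [hrow, hksrc q hq]
    by_cases hr : ∃ r, k q r ≠ 0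
    · rw [if_pos hr, Nat.add_sub_cancel' (hvw q)]
    · rw [if_neg hr]
      push_neg at hr
      have h0 : v q = 0 := by
        rw [← hksrc q hq]; exact Finset.sum_eq_zero fun r _ => hr r
      have h1 : w q = 0 := (hz q).mp h0
      show _ = w q
      omega
  · intro q hq
    simp only [if_pos hq, zero_add]
  · intro q hq
    simp only [if_neg hq]
  · intro q
    by_cases hq : ∃ q', (q, a, q') ∈ ΔQ
    · simp only [if_pos hq, zero_add, hktgt q hq]
      exact Finset.sum_le_sum fun p _ => hk'le p q
    · simp only [if_neg hq, hkfix q hq]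
      exact Nat.add_le_add (hvw q) (Finset.sum_le_sum fun p _ => hk'le p q)
  · intro q
    simp only
    constructor
    · intro h0
      by_cases hq : ∃ q', (q, a, q') ∈ ΔQ
      · rw [hktgt q hq] at h0
        rw [if_pos hq, zero_add]
        refine Finset.sum_eq_zero fun p _ => hk'z p q ?_
        exact (Finset.sum_eq_zero_iff.mp h0) p (Finset.mem_univ p)
      · rw [hkfix q hq] at h0
        rw [if_neg hq]
        have h1 : v q = 0 := by omega
        have h2 : ∑ p, k p q = 0 := by omega
        have h3 : ∑ p, k' p q = 0 :=
          Finset.sum_eq_zero fun p _ => hk'z p q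
            ((Finset.sum_eq_zero_iff.mp h2) p (Finset.mem_univ p))
        rw [(hz q).mp h1, h3]
    · intro h0
      have hle2 : v' q ≤ (if (∃ q', (q, a, q') ∈ ΔQ) then 0 else w q) + ∑ p, k' p q := by
        by_cases hq : ∃ q', (q, a, q') ∈ ΔQ
        · rw [if_pos hq, zero_add, hktgt q hq]
          exact Finset.sum_le_sum fun p _ => hk'le p q
        · rw [if_neg hq, hkfix q hq]
          exact Nat.add_le_add (hvw q) (Finset.sum_le_sum fun p _ => hk'le p q)
      omega

private lemma bwd_sync [Fintype Q] {ΔC : Set (C × A × C)} {ΔQ : Set (Q × A × Q)}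
    {a : A} {x y d' : Conf C Q} (h : SyncStepOn ΔC ΔQ a x y) (hle : Le0 y d') :
    ∃ d : Conf C Q, SyncStepOn ΔC ΔQ a d d' ∧ Le0 x d := by
  classical
  obtain ⟨c, v⟩ := x
  obtain ⟨c', v'⟩ := y
  obtain ⟨dc', w'⟩ := d'
  obtain ⟨hcd, hvw, hz⟩ := hle
  simp only at hcd hvw hz
  cases hcd
  obtain ⟨hc1, hc2, k, hkΔ, hksrc, hktgt, hkfix⟩ := h
  simp only at hc1 hc2 hksrc hktgt hkfix
  set ch : Q → Q := fun q => if h : ∃ r, k r q ≠ 0 then h.choose else q with hch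
  have hchspec : ∀ q, (∃ r, k r q ≠ 0) → k (ch q) q ≠ 0 := by
    intro q hq
    simp only [hch, dif_pos hq]
    exact hq.choose_spec
  set k' : Q → Q → ℕ := fun p q =>
    k p q + if (∃ r, k r q ≠ 0) ∧ p = ch q then w' q - v' q else 0 with hk'
  have hk'z : ∀ p q, k p q = 0 → k' p q = 0 := by
    intro p q h0
    simp only [hk', h0, zero_add, ite_eq_right_iff]
    rintro ⟨he, rfl⟩
    exact absurd h0 (hchspec q he)
  have hk'le : ∀ p q, k p q ≤ k' p q := fun p q => Nat.le_add_right _ _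
  have hcol : ∀ q, ∑ p, k' p q =
      (∑ p, k p q) + (if (∃ r, k r q ≠ 0) then w' q - v' q else 0) := by
    intro q
    simp only [hk']
    rw [Finset.sum_add_distrib]
    congr 1
    by_cases hq : ∃ r, k r q ≠ 0
    · simp [hq, Finset.sum_ite_eq']
    · simp [hq]
  set w : Q → ℕ := fun q =>
    if (∃ q', (q, a, q') ∈ ΔQ) then ∑ p', k' q p'
    else v q + (if ∃ r, k r q ≠ 0 then 0 else w' q - v' q) with hw
  refine ⟨(c, w), ⟨hc1, hc2, k', ?_, ?_, ?_, ?_⟩, rfl, ?_, ?_⟩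
  · intro p p' hne
    by_cases h0 : k p p' = 0
    · exact absurd (hk'z p p' h0) hne
    · exact hkΔ p p' h0
  · intro q hq
    simp only [hw, if_pos hq]
  · intro q hq
    rw [hcol, ← hktgt q hq]
    by_cases hr : ∃ r, k r q ≠ 0
    · rw [if_pos hr]
      have := hvw q
      show w' q = _
      omega
    · rw [if_neg hr]
      push_neg at hr
      have h0 : v' q = 0 := by
        rw [hktgt q hq]; exact Finset.sum_eq_zero fun r _ => hr r
      have h1 : w' q = 0 := (hz q).mp h0
      show w' q = _
      omega
  · intro q hq
    simp only [hw, if_neg hq]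
    rw [hcol]
    have h1 := hkfix q hq
    have h2 := hvw q
    by_cases hr : ∃ r, k r q ≠ 0
    · rw [if_pos hr, if_pos hr]; omega
    · rw [if_neg hr, if_neg hr]; omega
  · intro q
    simp only [hw]
    by_cases hq : ∃ q', (q, a, q') ∈ ΔQ
    · rw [if_pos hq, ← hksrc q hq]
      exact Finset.sum_le_sum fun p _ => hk'le q p
    · rw [if_neg hq]
      exact Nat.le_add_right _ _
  · intro q
    simp only [hw]
    by_cases hq : ∃ q', (q, a, q') ∈ ΔQ
    · rw [if_pos hq, ← hksrc q hq]
      constructor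
      · intro h0
        refine Finset.sum_eq_zero fun p _ => hk'z q p ?_
        exact (Finset.sum_eq_zero_iff.mp h0) p (Finset.mem_univ p)
      · intro h0
        refine Finset.sum_eq_zero fun p _ => ?_
        have := Finset.sum_eq_zero_iff.mp h0 p (Finset.mem_univ p)
        have := hk'le q p
        omega
    · rw [if_neg hq]
      constructor
      · intro h0
        by_cases hr : ∃ r, k r q ≠ 0
        · rw [if_pos hr]; omega
        · rw [if_neg hr]
          push_neg at hr
          have h1 : ∑ p, k p q = 0 := Finset.sum_eq_zero fun r _ => hr r
          have h2 : v' q = 0 := by rw [hkfix q hq]; omega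
          have h3 : w' q = 0 := (hz q).mp h2
          omega
      · intro h0; omega

/-- Every counter system whose steps are exactly the guarded
synchronization steps induced by a finite set of synchronization transitions
together with a guard pair `(Ge a, Ga a)` for each label `a` is fully
`≼₀`-compatible. -/
theorem stmt7 [Fintype C] [Fintype Q] [Nonempty C] [Nonempty Q] [Fintype A]
    (ΔC : Set (C × A × C)) (ΔQ : Set (Q × A × Q))
    (Ge Ga : A → Set (C ⊕ Q))
    (T : Set (Conf C Q × Conf C Q))
    (hT : ∀ x y : Conf C Q, (x, y) ∈ T ↔ GSyncStep ΔC ΔQ Ge Ga x y) :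
    FwdCompat T ∧ BwdCompat T := by
  constructor
  · rintro x y d hxy hle
    obtain ⟨a, hg, hs⟩ := (hT x y).mp hxy
    obtain ⟨d', hs', hle'⟩ := fwd_sync hs hle
    exact ⟨d', (hT _ _).mpr ⟨a, guard_mono hle hg, hs'⟩, hle'⟩
  · rintro x y d' hxy hle
    obtain ⟨a, hg, hs⟩ := (hT x y).mp hxy
    obtain ⟨d, hs', hle'⟩ := bwd_sync hs hle
    exact ⟨d, (hT _ _).mpr ⟨a, guard_mono hle' hg, hs'⟩, hle'⟩

end CS01
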